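/- arXiv:2104.03052 — 4 statements merged into one kernel-verified Lean document; each statement's English description precedes it below -/
import Mathlib

section
/- Let (M₁,w₁), (M₂,w₂) be pointed Θ-models with Th⁺_BIL(M₁,w₁) ⊆ Th⁺_BIL(M₂,w₂), where both M₁ and M₂ are BIL-saturated. Then the relation A defined by u A s iff Th⁺_BIL(M_i,u) ⊆ Th⁺_BIL(M_j,s) (for u ∈ W_i, s ∈ W_j, {i,j} = {1,2}) is a bi-asimulation from (M₁,w₁) to (M₂,w₂). -/
/-! Common vocabulary for bi-intuitionistic propositional logic (BIL),
Kripke models, bi-asimulations, abstract bi-intuitionistic logics and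
bi-unravellings, following Olkhovikov & Badia,
"Maximality of bi-intuitionistic propositional logic". -/

/-- Formulas of bi-intuitionistic propositional logic over the type `A` of
propositional letters. -/
inductive BILForm (A : Type) : Type
  | bot : BILForm A
  | atom : A → BILForm A
  | conj : BILForm A → BILForm A → BILForm A
  | disj : BILForm A → BILForm A → BILForm A
  | impl : BILForm A → BILForm A → BILForm A
  | coimpl : BILForm A → BILForm A → BILForm A

namespace BILForm

/-- The propositional letters occurring in a formula; a formula belongs to
`BIL(Θ)` iff its letters are contained in `Θ`. -/
def letters {A : Type} : BILForm A → Set A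
  | bot => ∅
  | atom p => {p}
  | conj φ ψ => letters φ ∪ letters ψ
  | disj φ ψ => letters φ ∪ letters ψ
  | impl φ ψ => letters φ ∪ letters ψ
  | coimpl φ ψ => letters φ ∪ letters ψ

end BILForm

/-- A (bi-intuitionistic) Kripke model with propositional letters `A`,
carried on the subset `dom` of the type `Ω`: a nonempty set of worlds,
partially ordered by `rel`, together with a monotone valuation. -/
structure SKModel (A : Type) (Ω : Type) : Type where
  dom : Set Ω
  nonempty : dom.Nonempty
  rel : Ω → Ω → Prop
  rel_mem : ∀ {u v}, rel u v → u ∈ dom ∧ v ∈ dom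
  rel_refl : ∀ u ∈ dom, rel u u
  rel_trans : ∀ {u v w}, rel u v → rel v w → rel u w
  rel_antisymm : ∀ {u v}, rel u v → rel v u → u = v
  val : A → Set Ω
  val_mem : ∀ p, val p ⊆ dom
  val_mono : ∀ (p : A) {u v}, rel u v → u ∈ val p → v ∈ val p

/-- Kripke satisfaction for bi-intuitionistic formulas. -/
def BILSat {A Ω : Type} (M : SKModel A Ω) : BILForm A → Ω → Prop
  | .bot, _ => False
  | .atom p, w => w ∈ M.val p
  | .conj φ ψ, w => BILSat M φ w ∧ BILSat M ψ w
  | .disj φ ψ, w => BILSat M φ w ∨ BILSat M ψ w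
  | .impl φ ψ, w => ∀ v, M.rel w v → BILSat M φ v → BILSat M ψ v
  | .coimpl φ ψ, w => ∃ v, M.rel v w ∧ BILSat M φ v ∧ ¬ BILSat M ψ v

/-- `(Γ, Δ)` is satisfied at `(M, w)`: all of `Γ` true, all of `Δ` false. -/
def BILSatTh {A Ω : Type} (M : SKModel A Ω) (w : Ω) (Γ Δ : Set (BILForm A)) : Prop :=
  (∀ φ ∈ Γ, BILSat M φ w) ∧ (∀ φ ∈ Δ, ¬ BILSat M φ w)

/-- `Th⁺_BIL(M₁,w₁) ⊆ Th⁺_BIL(M₂,w₂)` over the signature `Θ`. -/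
def BILThPosSubset {A Ω₁ Ω₂ : Type} (Θ : Set A) (M₁ : SKModel A Ω₁) (w₁ : Ω₁)
    (M₂ : SKModel A Ω₂) (w₂ : Ω₂) : Prop :=
  ∀ φ : BILForm A, φ.letters ⊆ Θ → BILSat M₁ φ w₁ → BILSat M₂ φ w₂

/-- `Th_BIL(M₁,w₁) = Th_BIL(M₂,w₂)` over the signature `Θ`. -/
def BILThEq {A Ω₁ Ω₂ : Type} (Θ : Set A) (M₁ : SKModel A Ω₁) (w₁ : Ω₁)
    (M₂ : SKModel A Ω₂) (w₂ : Ω₂) : Prop :=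
  ∀ φ : BILForm A, φ.letters ⊆ Θ → (BILSat M₁ φ w₁ ↔ BILSat M₂ φ w₂)

/-- A bi-asimulation (over the signature `Θ`) from `(M₁,w₁)` to `(M₂,w₂)`,
given by its two components `R ⊆ W₁ × W₂` and `S ⊆ W₂ × W₁`. -/
structure IsBiAsim {A Ω₁ Ω₂ : Type} (Θ : Set A) (M₁ : SKModel A Ω₁) (M₂ : SKModel A Ω₂)
    (w₁ : Ω₁) (w₂ : Ω₂) (R : Ω₁ → Ω₂ → Prop) (S : Ω₂ → Ω₁ → Prop) : Prop where
  memR : ∀ {v s}, R v s → v ∈ M₁.dom ∧ s ∈ M₂.dom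
  memS : ∀ {v s}, S v s → v ∈ M₂.dom ∧ s ∈ M₁.dom
  elem : R w₁ w₂
  atomR : ∀ p ∈ Θ, ∀ {v s}, R v s → v ∈ M₁.val p → s ∈ M₂.val p
  atomS : ∀ p ∈ Θ, ∀ {v s}, S v s → v ∈ M₂.val p → s ∈ M₁.val p
  backR : ∀ {v s t}, R v s → M₂.rel s t → ∃ u, M₁.rel v u ∧ S t u ∧ R u t
  backS : ∀ {v s t}, S v s → M₁.rel s t → ∃ u, M₂.rel v u ∧ R t u ∧ S u t
  forthR : ∀ {v s u}, R v s → M₁.rel u v → ∃ t, M₂.rel t s ∧ S t u ∧ R u t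
  forthS : ∀ {v s u}, S v s → M₂.rel u v → ∃ t, M₁.rel t s ∧ R t u ∧ S u t

/-- `M` is a submodel of `N`. -/
def Submodel {A Ω : Type} (M N : SKModel A Ω) : Prop :=
  M.dom ⊆ N.dom ∧ (∀ u ∈ M.dom, ∀ v ∈ M.dom, (M.rel u v ↔ N.rel u v)) ∧
    ∀ p, M.val p = N.val p ∩ M.dom

/-- `U` is the union of the countable chain `Mc` of models. -/
def IsUnionOfChain {A Ω : Type} (Mc : ℕ → SKModel A Ω) (U : SKModel A Ω) : Prop :=
  U.dom = ⋃ n, (Mc n).dom ∧ (∀ u v, U.rel u v ↔ ∃ n, (Mc n).rel u v) ∧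
    ∀ p, U.val p = ⋃ n, (Mc n).val p

/-- `N'` has the same frame as `N` and the same valuation on the letters in
`Θ` (this expresses both `Σ`-expansions and `Σ`-reducts). -/
def IsExpansion {A Ω : Type} (Θ : Set A) (N N' : SKModel A Ω) : Prop :=
  N'.dom = N.dom ∧ (∀ u v, N'.rel u v ↔ N.rel u v) ∧ ∀ p ∈ Θ, N'.val p = N.val p

/-- `M ≼_BIL N` over the signature `Θ`. -/
def BILElemSub {A Ω : Type} (Θ : Set A) (M N : SKModel A Ω) : Prop :=
  Submodel M N ∧ ∀ w ∈ M.dom, ∀ φ : BILForm A, φ.letters ⊆ Θ →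
    (BILSat M φ w ↔ BILSat N φ w)

/-- `(Γ,Δ)` is a successor BIL-type of `(M,v)` (over the signature `Θ`). -/
def BILSuccType {A Ω : Type} (Θ : Set A) (M : SKModel A Ω) (v : Ω)
    (Γ Δ : Set (BILForm A)) : Prop :=
  (∀ φ ∈ Γ, BILForm.letters φ ⊆ Θ) ∧ (∀ φ ∈ Δ, BILForm.letters φ ⊆ Θ) ∧
    ∀ Γ' ⊆ Γ, ∀ Δ' ⊆ Δ, Γ'.Finite → Δ'.Finite →
      ∃ u, M.rel v u ∧ BILSatTh M u Γ' Δ'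

/-- `(Γ,Δ)` is a predecessor BIL-type of `(M,v)` (over the signature `Θ`). -/
def BILPredType {A Ω : Type} (Θ : Set A) (M : SKModel A Ω) (v : Ω)
    (Γ Δ : Set (BILForm A)) : Prop :=
  (∀ φ ∈ Γ, BILForm.letters φ ⊆ Θ) ∧ (∀ φ ∈ Δ, BILForm.letters φ ⊆ Θ) ∧
    ∀ Γ' ⊆ Γ, ∀ Δ' ⊆ Δ, Γ'.Finite → Δ'.Finite →
      ∃ u, M.rel u v ∧ BILSatTh M u Γ' Δ'

/-- `M` is BIL-saturated (over the signature `Θ`): it realizes all of its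
successor and predecessor BIL-types. -/
def BILSaturated {A Ω : Type} (Θ : Set A) (M : SKModel A Ω) : Prop :=
  ∀ v ∈ M.dom, ∀ Γ Δ : Set (BILForm A),
    (BILSuccType Θ M v Γ Δ → ∃ u, M.rel v u ∧ BILSatTh M u Γ Δ) ∧
    (BILPredType Θ M v Γ Δ → ∃ u, M.rel u v ∧ BILSatTh M u Γ Δ)

/-- An isomorphism `g` of Kripke `Θ`-models from `M` onto `N`. -/
def BILIso {A Ω₁ Ω₂ : Type} (Θ : Set A) (M : SKModel A Ω₁) (N : SKModel A Ω₂)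
    (g : Ω₁ → Ω₂) : Prop :=
  Set.InjOn g M.dom ∧ g '' M.dom = N.dom ∧
  (∀ u ∈ M.dom, ∀ v ∈ M.dom, (M.rel u v ↔ N.rel (g u) (g v))) ∧
  (∀ p ∈ Θ, ∀ u ∈ M.dom, (u ∈ M.val p ↔ g u ∈ N.val p))

/-- An abstract bi-intuitionistic logic over the propositional letters `A`:
a set `In Θ` of `Θ`-formulas for every signature `Θ ⊆ A`, and a satisfaction
relation enjoying the Isomorphism, Expansion, Occurrence and Closure
properties. -/
structure AbsLogic (A : Type) : Type 1 where
  F : Type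
  In : Set A → Set F
  Sat : ∀ {Ω : Type}, SKModel A Ω → Ω → F → Prop
  in_mono : ∀ {Θ Θ' : Set A}, Θ ⊆ Θ' → In Θ ⊆ In Θ'
  iso_invariant : ∀ (Θ : Set A) {Ω₁ Ω₂ : Type} (M : SKModel A Ω₁) (N : SKModel A Ω₂)
      (g : Ω₁ → Ω₂), BILIso Θ M N g →
      ∀ φ ∈ In Θ, ∀ w ∈ M.dom, (Sat M w φ ↔ Sat N (g w) φ)
  expansion : ∀ (Θ : Set A) {Ω : Type} (M M' : SKModel A Ω), M.dom = M'.dom →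
      (∀ u v, M.rel u v ↔ M'.rel u v) → (∀ p ∈ Θ, M.val p = M'.val p) →
      ∀ φ ∈ In Θ, ∀ w, (Sat M w φ ↔ Sat M' w φ)
  occurrence : ∀ (Θ : Set A) (φ : F), φ ∈ In Θ →
      ∃ Θ₀ : Set A, Θ₀.Finite ∧ Θ₀ ⊆ Θ ∧ φ ∈ In Θ₀
  fbot : F
  fconj : F → F → F
  fdisj : F → F → F
  fimpl : F → F → F
  fcoimpl : F → F → F
  mem_bot : ∀ Θ, fbot ∈ In Θ
  mem_conj : ∀ {Θ φ ψ}, φ ∈ In Θ → ψ ∈ In Θ → fconj φ ψ ∈ In Θ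
  mem_disj : ∀ {Θ φ ψ}, φ ∈ In Θ → ψ ∈ In Θ → fdisj φ ψ ∈ In Θ
  mem_impl : ∀ {Θ φ ψ}, φ ∈ In Θ → ψ ∈ In Θ → fimpl φ ψ ∈ In Θ
  mem_coimpl : ∀ {Θ φ ψ}, φ ∈ In Θ → ψ ∈ In Θ → fcoimpl φ ψ ∈ In Θ
  sat_bot : ∀ {Ω : Type} (M : SKModel A Ω) (w : Ω), ¬ Sat M w fbot
  sat_conj : ∀ {Ω : Type} (M : SKModel A Ω) (w : Ω) (φ ψ : F),
      Sat M w (fconj φ ψ) ↔ (Sat M w φ ∧ Sat M w ψ)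
  sat_disj : ∀ {Ω : Type} (M : SKModel A Ω) (w : Ω) (φ ψ : F),
      Sat M w (fdisj φ ψ) ↔ (Sat M w φ ∨ Sat M w ψ)
  sat_impl : ∀ {Ω : Type} (M : SKModel A Ω) (w : Ω) (φ ψ : F),
      Sat M w (fimpl φ ψ) ↔ ∀ v, M.rel w v → Sat M v φ → Sat M v ψ
  sat_coimpl : ∀ {Ω : Type} (M : SKModel A Ω) (w : Ω) (φ ψ : F),
      Sat M w (fcoimpl φ ψ) ↔ ∃ v, M.rel v w ∧ Sat M v φ ∧ ¬ Sat M v ψ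

namespace AbsLogic

variable {A : Type}

/-- The `L`-theory `(Γ,Δ)` is satisfied at `(M,w)`. -/
def SatTh (L : AbsLogic A) {Ω : Type} (M : SKModel A Ω) (w : Ω) (Γ Δ : Set L.F) : Prop :=
  (∀ φ ∈ Γ, L.Sat M w φ) ∧ (∀ φ ∈ Δ, ¬ L.Sat M w φ)

/-- `Th⁺_L(M₁,w₁) ⊆ Th⁺_L(M₂,w₂)` over the signature `Θ`. -/
def ThPosSubset (L : AbsLogic A) (Θ : Set A) {Ω₁ Ω₂ : Type} (M₁ : SKModel A Ω₁) (w₁ : Ω₁)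
    (M₂ : SKModel A Ω₂) (w₂ : Ω₂) : Prop :=
  ∀ φ ∈ L.In Θ, L.Sat M₁ w₁ φ → L.Sat M₂ w₂ φ

/-- `Th_L(M₁,w₁) = Th_L(M₂,w₂)` over the signature `Θ`. -/
def ThEq (L : AbsLogic A) (Θ : Set A) {Ω₁ Ω₂ : Type} (M₁ : SKModel A Ω₁) (w₁ : Ω₁)
    (M₂ : SKModel A Ω₂) (w₂ : Ω₂) : Prop :=
  ∀ φ ∈ L.In Θ, (L.Sat M₁ w₁ φ ↔ L.Sat M₂ w₂ φ)

/-- `L` is preserved under bi-asimulations. -/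
def Preserved (L : AbsLogic A) : Prop :=
  ∀ (Θ : Set A) (Ω₁ Ω₂ : Type) (M₁ : SKModel A Ω₁) (M₂ : SKModel A Ω₂)
    (w₁ : Ω₁) (w₂ : Ω₂) (R : Ω₁ → Ω₂ → Prop) (S : Ω₂ → Ω₁ → Prop),
    IsBiAsim Θ M₁ M₂ w₁ w₂ R S → L.ThPosSubset Θ M₁ w₁ M₂ w₂

/-- `L` is ★-compact. -/
def StarCompact (L : AbsLogic A) : Prop :=
  ∀ (Θ : Set A) (Γ Δ : Set L.F), Γ ⊆ L.In Θ → Δ ⊆ L.In Θ →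
    (∀ Γ' ⊆ Γ, ∀ Δ' ⊆ Δ, Γ'.Finite → Δ'.Finite →
      ∃ (Ω : Type) (M : SKModel A Ω) (w : Ω), w ∈ M.dom ∧ L.SatTh M w Γ' Δ') →
    ∃ (Ω : Type) (M : SKModel A Ω) (w : Ω), w ∈ M.dom ∧ L.SatTh M w Γ Δ

/-- `M ≼_L N` over the signature `Θ`. -/
def ElemSub (L : AbsLogic A) (Θ : Set A) {Ω : Type} (M N : SKModel A Ω) : Prop :=
  Submodel M N ∧ ∀ w ∈ M.dom, ∀ φ ∈ L.In Θ, (L.Sat M w φ ↔ L.Sat N w φ)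

/-- `L` has the Tarski Union Property. -/
def HasTUP (L : AbsLogic A) : Prop :=
  ∀ (Θ : Set A) (Ω : Type) (Mc : ℕ → SKModel A Ω),
    (∀ n, L.ElemSub Θ (Mc n) (Mc (n + 1))) →
    ∀ U : SKModel A Ω, IsUnionOfChain Mc U → ∀ n, L.ElemSub Θ (Mc n) U

/-- `(Γ,Δ)` is a successor `L`-type of `(M,v)` (over the signature `Θ`). -/
def SuccType (L : AbsLogic A) (Θ : Set A) {Ω : Type} (M : SKModel A Ω) (v : Ω)
    (Γ Δ : Set L.F) : Prop :=
  Γ ⊆ L.In Θ ∧ Δ ⊆ L.In Θ ∧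
    ∀ Γ' ⊆ Γ, ∀ Δ' ⊆ Δ, Γ'.Finite → Δ'.Finite →
      ∃ u, M.rel v u ∧ L.SatTh M u Γ' Δ'

/-- `(Γ,Δ)` is a predecessor `L`-type of `(M,v)` (over the signature `Θ`). -/
def PredType (L : AbsLogic A) (Θ : Set A) {Ω : Type} (M : SKModel A Ω) (v : Ω)
    (Γ Δ : Set L.F) : Prop :=
  Γ ⊆ L.In Θ ∧ Δ ⊆ L.In Θ ∧
    ∀ Γ' ⊆ Γ, ∀ Δ' ⊆ Δ, Γ'.Finite → Δ'.Finite →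
      ∃ u, M.rel u v ∧ L.SatTh M u Γ' Δ'

/-- `M` is `L`-saturated (over the signature `Θ`). -/
def Saturated (L : AbsLogic A) (Θ : Set A) {Ω : Type} (M : SKModel A Ω) : Prop :=
  ∀ v ∈ M.dom, ∀ Γ Δ : Set L.F,
    (L.SuccType Θ M v Γ Δ → ∃ u, M.rel v u ∧ L.SatTh M u Γ Δ) ∧
    (L.PredType Θ M v Γ Δ → ∃ u, M.rel u v ∧ L.SatTh M u Γ Δ)

/-- An `L`-elementary embedding of `M` into `N` (over the signature `Θ`). -/
def ElemEmbedding (L : AbsLogic A) (Θ : Set A) {Ω₁ Ω₂ : Type}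
    (M : SKModel A Ω₁) (N : SKModel A Ω₂) (f : Ω₁ → Ω₂) : Prop :=
  Set.InjOn f M.dom ∧ Set.MapsTo f M.dom N.dom ∧
  (∀ u ∈ M.dom, ∀ v ∈ M.dom, (M.rel u v ↔ N.rel (f u) (f v))) ∧
  (∀ u ∈ M.dom, ∀ φ ∈ L.In Θ, (L.Sat M u φ ↔ L.Sat N (f u) φ))

end AbsLogic

/-- An abstract bi-intuitionistic logic extending `BIL`: bi-intuitionistic
formulas are present in it in their usual form and with their usual meaning. -/
structure BILExtension (A : Type) extends AbsLogic A where
  ofBIL : BILForm A → F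
  ofBIL_mem : ∀ (Θ : Set A) (φ : BILForm A), φ.letters ⊆ Θ → ofBIL φ ∈ In Θ
  ofBIL_bot : ofBIL .bot = fbot
  ofBIL_conj : ∀ φ ψ, ofBIL (.conj φ ψ) = fconj (ofBIL φ) (ofBIL ψ)
  ofBIL_disj : ∀ φ ψ, ofBIL (.disj φ ψ) = fdisj (ofBIL φ) (ofBIL ψ)
  ofBIL_impl : ∀ φ ψ, ofBIL (.impl φ ψ) = fimpl (ofBIL φ) (ofBIL ψ)
  ofBIL_coimpl : ∀ φ ψ, ofBIL (.coimpl φ ψ) = fcoimpl (ofBIL φ) (ofBIL ψ)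
  sat_ofBIL : ∀ {Ω : Type} (M : SKModel A Ω) (w : Ω) (φ : BILForm A),
      Sat M w (ofBIL φ) ↔ BILSat M φ w

/-! ### Bi-unravellings -/

/-- The universe `W^un_w` of the bi-unravelling of `M` around `w`: finite
nonempty sequences starting at `w` whose consecutive elements are
`≺`- or `≻`-related and distinct. -/
def unravDom {A Ω : Type} (M : SKModel A Ω) (w : Ω) : Set (List Ω) :=
  {l | l ≠ [] ∧ l.head? = some w ∧ (∀ x ∈ l, x ∈ M.dom) ∧
    l.Chain' (fun u v => (M.rel u v ∨ M.rel v u) ∧ u ≠ v)}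

/-- The one-step relation `ρ^un_w` of the bi-unravelling. -/
def unravStep {A Ω : Type} (M : SKModel A Ω) (w : Ω) (s t : List Ω) : Prop :=
  s ∈ unravDom M w ∧ t ∈ unravDom M w ∧
    ((∃ x y, s.getLast? = some y ∧ t = s ++ [x] ∧ M.rel y x) ∨
     (∃ x y, t.getLast? = some y ∧ s = t ++ [x] ∧ M.rel x y))

/-- The accessibility relation `≺^un_w` of the bi-unravelling: the reflexive
and transitive closure of `ρ^un_w`. -/
def unravRel {A Ω : Type} (M : SKModel A Ω) (w : Ω) : List Ω → List Ω → Prop :=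
  Relation.ReflTransGen (unravStep M w)

/-- The valuation `V^un_w` of the bi-unravelling: a sequence satisfies a
letter iff its last element does. -/
def unravVal {A Ω : Type} (M : SKModel A Ω) (w : Ω) (p : A) : Set (List Ω) :=
  {l | l ∈ unravDom M w ∧ ∃ y, l.getLast? = some y ∧ y ∈ M.val p}

/-- `U` is (a presentation of) the bi-unravelling `M^un_w` of `M` around `w`. -/
def IsUnravelling {A Ω : Type} (M : SKModel A Ω) (w : Ω) (U : SKModel A (List Ω)) : Prop :=
  U.dom = unravDom M w ∧
  (∀ α β, U.rel α β ↔ (α ∈ unravDom M w ∧ β ∈ unravDom M w ∧ unravRel M w α β)) ∧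
  (∀ p, U.val p = unravVal M w p)

/-- `M` is a bi-unravelled model presented in the canonical form: its frame is
literally the bi-unravelling frame of `M₀` around `w₀` (the valuation of `M`
is arbitrary). -/
def IsBiUnravelledForm {A Ω : Type} (M₀ : SKModel A Ω) (w₀ : Ω)
    (M : SKModel A (List Ω)) : Prop :=
  M.dom = unravDom M₀ w₀ ∧
  (∀ α β, M.rel α β ↔ (α ∈ unravDom M₀ w₀ ∧ β ∈ unravDom M₀ w₀ ∧ unravRel M₀ w₀ α β))

/-- `(N,v)` is a bi-unravelled pointed model: its underlying frame is
isomorphic, via a point-preserving order-respecting bijection, to the frame of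
some bi-unravelling. -/
def IsBiUnravelled {A Ω' : Type} (N : SKModel A Ω') (v : Ω') : Prop :=
  ∃ (Ω₀ : Type) (M₀ : SKModel A Ω₀) (w₀ : Ω₀), w₀ ∈ M₀.dom ∧
    ∃ g : Ω' → List Ω₀, Set.InjOn g N.dom ∧ g '' N.dom = unravDom M₀ w₀ ∧ g v = [w₀] ∧
      ∀ x ∈ N.dom, ∀ y ∈ N.dom, (N.rel x y ↔ unravRel M₀ w₀ (g x) (g y))

/-- `qp` and `qm` provide the fresh letters `q⁺_α`, `q⁻_α` (for `α ∈ D`)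
used to form the signature `Θ_M`. -/
def FreshLetters {A Ω : Type} (Θ : Set A) (D : Set Ω) (qp qm : Ω → A) : Prop :=
  Set.InjOn qp D ∧ Set.InjOn qm D ∧
  (∀ α ∈ D, qp α ∉ Θ) ∧ (∀ α ∈ D, qm α ∉ Θ) ∧
  (∀ α ∈ D, ∀ β ∈ D, qp α ≠ qm β)

/-- The signature `Θ_M = Θ ∪ {q⁺_α, q⁻_α : α ∈ D}`. -/
def bracketSig {A Ω : Type} (Θ : Set A) (D : Set Ω) (qp qm : Ω → A) : Set A :=
  Θ ∪ qp '' D ∪ qm '' D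

/-- `Mb` is the model `[M]`: same frame as `M`, same valuation on `Θ`, and
`β ∈ [V](q⁺_α) ↔ α ≺ β`, `β ∉ [V](q⁻_α) ↔ β ≺ α`. -/
def IsBracket {A Ω : Type} (Θ : Set A) (qp qm : Ω → A) (M Mb : SKModel A Ω) : Prop :=
  Mb.dom = M.dom ∧ (∀ u v, Mb.rel u v ↔ M.rel u v) ∧
  (∀ p ∈ Θ, Mb.val p = M.val p) ∧
  (∀ α ∈ M.dom, Mb.val (qp α) = {β | M.rel α β}) ∧
  (∀ α ∈ M.dom, Mb.val (qm α) = {β | β ∈ M.dom ∧ ¬ M.rel β α})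

/-! ### Formula schemas -/

/-- Binary formula schemas: expressions built from two placeholders and
propositional letters by `→` and `≪`. -/
inductive BILSchema (A : Type) : Type
  | v1 : BILSchema A
  | v2 : BILSchema A
  | atom : A → BILSchema A
  | impl : BILSchema A → BILSchema A → BILSchema A
  | coimpl : BILSchema A → BILSchema A → BILSchema A

namespace BILSchema

/-- The letters occurring in a schema. -/
def letters {A : Type} : BILSchema A → Set A
  | v1 => ∅
  | v2 => ∅
  | atom p => {p}
  | impl s t => letters s ∪ letters t
  | coimpl s t => letters s ∪ letters t

/-- Evaluation of a schema in an abstract logic `L` extending `BIL`, on a pair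
of `L`-formulas. -/
def eval {A : Type} (L : BILExtension A) : BILSchema A → L.F → L.F → L.F
  | v1, α, _ => α
  | v2, _, β => β
  | atom p, _, _ => L.ofBIL (.atom p)
  | impl s t, α, β => L.fimpl (eval L s α β) (eval L t α β)
  | coimpl s t, α, β => L.fcoimpl (eval L s α β) (eval L t α β)

end BILSchema

/-- `signSat b P` says that `P` holds if the sign `b` is `+` (`true`), and
that `P` fails if the sign is `−` (`false`). -/
def signSat (b : Bool) (P : Prop) : Prop := if b then P else ¬ P

/-- Iterated conjunction, with `⋀ ∅ := ⊥ → ⊥`. -/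
def bigConj {A : Type} : List (BILForm A) → BILForm A
  | [] => .impl .bot .bot
  | φ :: l => .conj φ (bigConj l)

/-- Iterated disjunction, with `⋁ ∅ := ⊥`. -/
def bigDisj {A : Type} : List (BILForm A) → BILForm A
  | [] => .bot
  | φ :: l => .disj φ (bigDisj l)

/-- `N` realizes (over the signature `Θ`) every BIL-type of its submodel `M`. -/
def BILRealizesTypesIn {A Ω : Type} (Θ : Set A) (M N : SKModel A Ω) : Prop :=
  ∀ v ∈ M.dom, ∀ Γ Δ : Set (BILForm A),
    (BILSuccType Θ M v Γ Δ → ∃ u, N.rel v u ∧ BILSatTh N u Γ Δ) ∧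
    (BILPredType Θ M v Γ Δ → ∃ u, N.rel u v ∧ BILSatTh N u Γ Δ)


section AsimHelpers

variable {A Ω Ω' : Type}

lemma sat_bigConj (M : SKModel A Ω) (l : List (BILForm A)) (w : Ω) :
    BILSat M (bigConj l) w ↔ ∀ φ ∈ l, BILSat M φ w := by
  induction l with
  | nil => simp [bigConj, BILSat]
  | cons φ l ih => simp [bigConj, BILSat, ih]

lemma sat_bigDisj (M : SKModel A Ω) (l : List (BILForm A)) (w : Ω) :
    BILSat M (bigDisj l) w ↔ ∃ φ ∈ l, BILSat M φ w := by
  induction l with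
  | nil => simp [bigDisj, BILSat]
  | cons φ l ih => simp [bigDisj, BILSat, ih]

lemma letters_bigConj {Θ : Set A} {l : List (BILForm A)}
    (h : ∀ φ ∈ l, BILForm.letters φ ⊆ Θ) : (bigConj l).letters ⊆ Θ := by
  induction l with
  | nil => simp [bigConj, BILForm.letters]
  | cons φ l ih =>
    simp only [bigConj, BILForm.letters, Set.union_subset_iff]
    exact ⟨h φ (by simp), ih fun ψ hψ => h ψ (by simp [hψ])⟩

lemma letters_bigDisj {Θ : Set A} {l : List (BILForm A)}
    (h : ∀ φ ∈ l, BILForm.letters φ ⊆ Θ) : (bigDisj l).letters ⊆ Θ := by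
  induction l with
  | nil => simp [bigDisj, BILForm.letters]
  | cons φ l ih =>
    simp only [bigDisj, BILForm.letters, Set.union_subset_iff]
    exact ⟨h φ (by simp), ih fun ψ hψ => h ψ (by simp [hψ])⟩

/-- The positive part of the `Θ`-theory of a point. -/
def asimPosTh (Θ : Set A) (M : SKModel A Ω) (t : Ω) : Set (BILForm A) :=
  {φ | BILForm.letters φ ⊆ Θ ∧ BILSat M φ t}

/-- The negative part of the `Θ`-theory of a point. -/
def asimNegTh (Θ : Set A) (M : SKModel A Ω) (t : Ω) : Set (BILForm A) :=
  {φ | BILForm.letters φ ⊆ Θ ∧ ¬ BILSat M φ t}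

lemma satTh_posneg {Θ : Set A} {M : SKModel A Ω} {t : Ω}
    {M' : SKModel A Ω'} {u : Ω'}
    (h : BILSatTh M' u (asimPosTh Θ M t) (asimNegTh Θ M t)) :
    BILThPosSubset Θ M t M' u ∧ BILThPosSubset Θ M' u M t := by
  constructor
  · intro φ hl hs
    exact h.1 φ ⟨hl, hs⟩
  · intro φ hl hs
    by_contra hn
    exact h.2 φ ⟨hl, hn⟩ hs

end AsimHelpers

/-- Lemma 3.2. Let `(M₁,w₁)`, `(M₂,w₂)` be pointed
`Θ`-models with `Th⁺_BIL(M₁,w₁) ⊆ Th⁺_BIL(M₂,w₂)`, both BIL-saturated. Then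
the relation defined by inclusion of positive BIL-theories is a
bi-asimulation from `(M₁,w₁)` to `(M₂,w₂)`. -/
theorem bil_asimulation_lemma (A : Type)
    (Θ : Set A) (Ω₁ Ω₂ : Type) (M₁ : SKModel A Ω₁) (M₂ : SKModel A Ω₂)
    (w₁ : Ω₁) (w₂ : Ω₂) (hw₁ : w₁ ∈ M₁.dom) (hw₂ : w₂ ∈ M₂.dom)
    (hsub : BILThPosSubset Θ M₁ w₁ M₂ w₂)
    (hsat₁ : BILSaturated Θ M₁) (hsat₂ : BILSaturated Θ M₂) :
    IsBiAsim Θ M₁ M₂ w₁ w₂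
      (fun u s => u ∈ M₁.dom ∧ s ∈ M₂.dom ∧ BILThPosSubset Θ M₁ u M₂ s)
      (fun u s => u ∈ M₂.dom ∧ s ∈ M₁.dom ∧ BILThPosSubset Θ M₂ u M₁ s) := by
  classical
  have lists : ∀ (Γ' : Set (BILForm A)), Γ'.Finite →
      ∃ l : List (BILForm A), ∀ φ, φ ∈ l ↔ φ ∈ Γ' :=
    fun Γ' h => ⟨h.toFinset.toList, fun φ => by simp⟩
  refine
    { memR := fun h => ⟨h.1, h.2.1⟩
      memS := fun h => ⟨h.1, h.2.1⟩
      elem := ⟨hw₁, hw₂, hsub⟩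
      atomR := ?_, atomS := ?_, backR := ?_, backS := ?_, forthR := ?_, forthS := ?_ }
  · intro p hp v s hvs hv
    exact hvs.2.2 (.atom p) (by simpa [BILForm.letters] using hp) hv
  · intro p hp v s hvs hv
    exact hvs.2.2 (.atom p) (by simpa [BILForm.letters] using hp) hv
  -- backR
  · rintro v s t ⟨hv, hs, hTh⟩ hst
    have ht : t ∈ M₂.dom := (M₂.rel_mem hst).2
    have succ : BILSuccType Θ M₁ v (asimPosTh Θ M₂ t) (asimNegTh Θ M₂ t) := by
      refine ⟨fun φ hφ => hφ.1, fun φ hφ => hφ.1, ?_⟩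
      intro Γ' hΓ' Δ' hΔ' hΓf hΔf
      by_contra hno
      push_neg at hno
      obtain ⟨lΓ, hlΓ⟩ := lists Γ' hΓf
      obtain ⟨lΔ, hlΔ⟩ := lists Δ' hΔf
      have hlet : (BILForm.impl (bigConj lΓ) (bigDisj lΔ)).letters ⊆ Θ := by
        simp only [BILForm.letters, Set.union_subset_iff]
        exact ⟨letters_bigConj fun φ hφ => (hΓ' ((hlΓ φ).1 hφ)).1,
          letters_bigDisj fun φ hφ => (hΔ' ((hlΔ φ).1 hφ)).1⟩
      have himpl : BILSat M₁ (.impl (bigConj lΓ) (bigDisj lΔ)) v := by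
        intro u hvu hconj
        rw [sat_bigDisj]
        by_contra hnd
        push_neg at hnd
        refine hno u hvu ⟨fun φ hφ => ?_, fun φ hφ => ?_⟩
        · exact (sat_bigConj M₁ lΓ u).1 hconj φ ((hlΓ φ).2 hφ)
        · exact hnd φ ((hlΔ φ).2 hφ)
      have h2 : BILSat M₂ (.impl (bigConj lΓ) (bigDisj lΔ)) s := hTh _ hlet himpl
      have hconjt : BILSat M₂ (bigConj lΓ) t := by
        rw [sat_bigConj]
        intro φ hφ
        exact (hΓ' ((hlΓ φ).1 hφ)).2
      obtain ⟨φ, hφ, hsat⟩ := (sat_bigDisj M₂ lΔ t).1 (h2 t hst hconjt)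
      exact (hΔ' ((hlΔ φ).1 hφ)).2 hsat
    obtain ⟨u, hvu, hsatTh⟩ := (hsat₁ v hv _ _).1 succ
    have hu : u ∈ M₁.dom := (M₁.rel_mem hvu).2
    obtain ⟨h1, h2⟩ := satTh_posneg hsatTh
    exact ⟨u, hvu, ⟨ht, hu, h1⟩, ⟨hu, ht, h2⟩⟩
  -- backS
  · rintro v s t ⟨hv, hs, hTh⟩ hst
    have ht : t ∈ M₁.dom := (M₁.rel_mem hst).2
    have succ : BILSuccType Θ M₂ v (asimPosTh Θ M₁ t) (asimNegTh Θ M₁ t) := by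
      refine ⟨fun φ hφ => hφ.1, fun φ hφ => hφ.1, ?_⟩
      intro Γ' hΓ' Δ' hΔ' hΓf hΔf
      obtain ⟨lΓ, hlΓ⟩ := lists Γ' hΓf
      obtain ⟨lΔ, hlΔ⟩ := lists Δ' hΔf
      have hlet : (BILForm.impl (bigConj lΓ) (bigDisj lΔ)).letters ⊆ Θ := by
        simp only [BILForm.letters, Set.union_subset_iff]
        exact ⟨letters_bigConj fun φ hφ => (hΓ' ((hlΓ φ).1 hφ)).1,
          letters_bigDisj fun φ hφ => (hΔ' ((hlΔ φ).1 hφ)).1⟩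
      have hns : ¬ BILSat M₁ (.impl (bigConj lΓ) (bigDisj lΔ)) s := by
        intro h
        have hconjt : BILSat M₁ (bigConj lΓ) t := by
          rw [sat_bigConj]
          intro φ hφ
          exact (hΓ' ((hlΓ φ).1 hφ)).2
        obtain ⟨φ, hφ, hsat⟩ := (sat_bigDisj M₁ lΔ t).1 (h t hst hconjt)
        exact (hΔ' ((hlΔ φ).1 hφ)).2 hsat
      have hnv : ¬ BILSat M₂ (.impl (bigConj lΓ) (bigDisj lΔ)) v :=
        fun h => hns (hTh _ hlet h)
      simp only [BILSat, not_forall] at hnv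
      obtain ⟨u, hvu, hconj, hnd⟩ := hnv
      refine ⟨u, hvu, fun φ hφ => ?_, fun φ hφ => ?_⟩
      · exact (sat_bigConj M₂ lΓ u).1 hconj φ ((hlΓ φ).2 hφ)
      · intro hsat
        exact hnd ((sat_bigDisj M₂ lΔ u).2 ⟨φ, (hlΔ φ).2 hφ, hsat⟩)
    obtain ⟨u, hvu, hsatTh⟩ := (hsat₂ v hv _ _).1 succ
    have hu : u ∈ M₂.dom := (M₂.rel_mem hvu).2
    obtain ⟨h1, h2⟩ := satTh_posneg hsatTh
    exact ⟨u, hvu, ⟨ht, hu, h1⟩, ⟨hu, ht, h2⟩⟩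
  -- forthR
  · rintro v s u ⟨hv, hs, hTh⟩ huv
    have hu : u ∈ M₁.dom := (M₁.rel_mem huv).1
    have pred : BILPredType Θ M₂ s (asimPosTh Θ M₁ u) (asimNegTh Θ M₁ u) := by
      refine ⟨fun φ hφ => hφ.1, fun φ hφ => hφ.1, ?_⟩
      intro Γ' hΓ' Δ' hΔ' hΓf hΔf
      obtain ⟨lΓ, hlΓ⟩ := lists Γ' hΓf
      obtain ⟨lΔ, hlΔ⟩ := lists Δ' hΔf
      have hlet : (BILForm.coimpl (bigConj lΓ) (bigDisj lΔ)).letters ⊆ Θ := by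
        simp only [BILForm.letters, Set.union_subset_iff]
        exact ⟨letters_bigConj fun φ hφ => (hΓ' ((hlΓ φ).1 hφ)).1,
          letters_bigDisj fun φ hφ => (hΔ' ((hlΔ φ).1 hφ)).1⟩
      have hco : BILSat M₁ (.coimpl (bigConj lΓ) (bigDisj lΔ)) v := by
        refine ⟨u, huv, ?_, ?_⟩
        · rw [sat_bigConj]
          intro φ hφ
          exact (hΓ' ((hlΓ φ).1 hφ)).2
        · rw [sat_bigDisj]
          rintro ⟨φ, hφ, hsat⟩
          exact (hΔ' ((hlΔ φ).1 hφ)).2 hsat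
      obtain ⟨t', hts, hconj, hnd⟩ := hTh _ hlet hco
      refine ⟨t', hts, fun φ hφ => ?_, fun φ hφ => ?_⟩
      · exact (sat_bigConj M₂ lΓ t').1 hconj φ ((hlΓ φ).2 hφ)
      · intro hsat
        exact hnd ((sat_bigDisj M₂ lΔ t').2 ⟨φ, (hlΔ φ).2 hφ, hsat⟩)
    obtain ⟨t, hts, hsatTh⟩ := (hsat₂ s hs _ _).2 pred
    have ht : t ∈ M₂.dom := (M₂.rel_mem hts).1
    obtain ⟨h1, h2⟩ := satTh_posneg hsatTh
    exact ⟨t, hts, ⟨ht, hu, h2⟩, ⟨hu, ht, h1⟩⟩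
  -- forthS
  · rintro v s u ⟨hv, hs, hTh⟩ huv
    have hu : u ∈ M₂.dom := (M₂.rel_mem huv).1
    have pred : BILPredType Θ M₁ s (asimPosTh Θ M₂ u) (asimNegTh Θ M₂ u) := by
      refine ⟨fun φ hφ => hφ.1, fun φ hφ => hφ.1, ?_⟩
      intro Γ' hΓ' Δ' hΔ' hΓf hΔf
      obtain ⟨lΓ, hlΓ⟩ := lists Γ' hΓf
      obtain ⟨lΔ, hlΔ⟩ := lists Δ' hΔf
      have hlet : (BILForm.coimpl (bigConj lΓ) (bigDisj lΔ)).letters ⊆ Θ := by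
        simp only [BILForm.letters, Set.union_subset_iff]
        exact ⟨letters_bigConj fun φ hφ => (hΓ' ((hlΓ φ).1 hφ)).1,
          letters_bigDisj fun φ hφ => (hΔ' ((hlΔ φ).1 hφ)).1⟩
      have hco : BILSat M₂ (.coimpl (bigConj lΓ) (bigDisj lΔ)) v := by
        refine ⟨u, huv, ?_, ?_⟩
        · rw [sat_bigConj]
          intro φ hφ
          exact (hΓ' ((hlΓ φ).1 hφ)).2
        · rw [sat_bigDisj]
          rintro ⟨φ, hφ, hsat⟩
          exact (hΔ' ((hlΔ φ).1 hφ)).2 hsat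
      obtain ⟨t', hts, hconj, hnd⟩ := hTh _ hlet hco
      refine ⟨t', hts, fun φ hφ => ?_, fun φ hφ => ?_⟩
      · exact (sat_bigConj M₁ lΓ t').1 hconj φ ((hlΓ φ).2 hφ)
      · intro hsat
        exact hnd ((sat_bigDisj M₁ lΔ t').2 ⟨φ, (hlΔ φ).2 hφ, hsat⟩)
    obtain ⟨t, hts, hsatTh⟩ := (hsat₁ s hs _ _).2 pred
    have ht : t ∈ M₁.dom := (M₁.rel_mem hts).1
    obtain ⟨h1, h2⟩ := satTh_posneg hsatTh
    exact ⟨t, hts, ⟨ht, hu, h2⟩, ⟨hu, ht, h1⟩⟩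
end

section
/- Let (M,w) be a pointed Θ-model, let k > 0, and let α₁,…,α_k ∈ W^un_w be pairwise distinct with α_i ρ^un_w α_{i+1} for all i < k. Then there exist m, n ≥ 0 with k = m + n + 1 and sequences v₁,…,v_m and u₁,…,u_n in W such that v_m ≺ … ≺ v₁ ≺ end(α_{m+1}) ≺ u₁ ≺ … ≺ u_n, and: α_i = α_{m+1}⌢(v₁,…,v_{m−i+1}) for all 1 ≤ i ≤ m, and α_{m+1+i} = α_{m+1}⌢(u₁,…,u_i) for all 1 ≤ i ≤ n. -/
private lemma unravStep_forced_fwd {A Ω : Type} {M : SKModel A Ω} {w : Ω} {s t : List Ω}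
    (h : unravStep M w s t) {x : Ω} (hx : t = s ++ [x]) :
    ∃ y, s.getLast? = some y ∧ M.rel y x := by
  rcases h.2.2 with ⟨x', y, hy, ht, hr⟩ | ⟨x', y, hy, hs, hr⟩
  · rw [hx] at ht
    have hxx : x = x' := by simpa using List.append_cancel_left ht
    exact ⟨y, hy, hxx ▸ hr⟩
  · exfalso
    rw [hx] at hs
    have := congrArg List.length hs
    simp at this

private lemma unravStep_forced_bwd {A Ω : Type} {M : SKModel A Ω} {w : Ω} {s t : List Ω}
    (h : unravStep M w s t) {x : Ω} (hx : s = t ++ [x]) :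
    ∃ y, t.getLast? = some y ∧ M.rel x y := by
  rcases h.2.2 with ⟨x', y, hy, ht, hr⟩ | ⟨x', y, hy, hs, hr⟩
  · exfalso
    rw [hx] at ht
    have := congrArg List.length ht
    simp at this
  · rw [hx] at hs
    have hxx : x' = x := by simpa using List.append_cancel_left hs.symm
    exact ⟨y, hy, hxx ▸ hr⟩

private lemma getLast?_append_concat {Ω : Type} (l l' : List Ω) (x : Ω) :
    (l ++ (l' ++ [x])).getLast? = some x := by
  rw [← List.append_assoc]; simp

/-- Lemma 3.3. Let `(M,w)` be a pointed `Θ`-model, `k > 0`,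
and let `α₁,…,α_k ∈ W^un_w` be pairwise distinct with `α_i ρ^un_w α_{i+1}`
for all `i < k`. Then there are `m, n ≥ 0` with `k = m + n + 1` and sequences
`v₁,…,v_m`, `u₁,…,u_n` in `W` with
`v_m ≺ … ≺ v₁ ≺ end(α_{m+1}) ≺ u₁ ≺ … ≺ u_n`, such that
`α_i = α_{m+1} ⌢ (v₁,…,v_{m−i+1})` for `1 ≤ i ≤ m` and
`α_{m+1+i} = α_{m+1} ⌢ (u₁,…,u_i)` for `1 ≤ i ≤ n`. -/
theorem bil_rho_chain (A : Type) (Ω : Type) (M : SKModel A Ω) (w : Ω)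
    (k : ℕ) (hk : 0 < k) (as : ℕ → List Ω)
    (hmem : ∀ i, 1 ≤ i → i ≤ k → as i ∈ unravDom M w)
    (hdist : ∀ i j, 1 ≤ i → i < j → j ≤ k → as i ≠ as j)
    (hstep : ∀ i, 1 ≤ i → i < k → unravStep M w (as i) (as (i + 1))) :
    ∃ m n : ℕ, k = m + n + 1 ∧
      ∃ vs us : ℕ → Ω,
        (∀ i, 1 ≤ i → i < m → M.rel (vs (i + 1)) (vs i)) ∧
        (∃ e, (as (m + 1)).getLast? = some e ∧
          (1 ≤ m → M.rel (vs 1) e) ∧ (1 ≤ n → M.rel e (us 1))) ∧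
        (∀ i, 1 ≤ i → i < n → M.rel (us i) (us (i + 1))) ∧
        (∀ i, 1 ≤ i → i ≤ m →
          as i = as (m + 1) ++ (List.range (m - i + 1)).map (fun j => vs (j + 1))) ∧
        (∀ i, 1 ≤ i → i ≤ n →
          as (m + 1 + i) = as (m + 1) ++ (List.range i).map (fun j => us (j + 1))) := by
  classical
  have hdir : ∀ i, 1 ≤ i → i < k →
      (∃ x, as (i+1) = as i ++ [x]) ∨ (∃ x, as i = as (i+1) ++ [x]) := by
    intro i h1 h2
    rcases (hstep i h1 h2).2.2 with ⟨x, y, _, ht, _⟩ | ⟨x, y, _, hs, _⟩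
    exacts [Or.inl ⟨x, ht⟩, Or.inr ⟨x, hs⟩]
  have hprop : ∀ i, 1 ≤ i → i < k → (∃ x, as (i+1) = as i ++ [x]) →
      ∀ j, i ≤ j → j < k → (∃ x, as (j+1) = as j ++ [x]) := by
    intro i h1 h2 hf j
    induction j with
    | zero => intro hij _; omega
    | succ j ih =>
      intro hij hjk
      rcases Nat.lt_or_ge i (j+1) with h | h
      · have hfj : ∃ x, as (j+1) = as j ++ [x] := ih (by omega) (by omega)
        rcases hdir (j+1) (by omega) hjk with hf' | hb'
        · exact hf'
        · exfalso
          obtain ⟨x, hx⟩ := hfj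
          obtain ⟨x', hx'⟩ := hb'
          have heq : as j ++ [x] = as (j+2) ++ [x'] := by rw [← hx, ← hx']
          have : as j = as (j+2) := (List.append_inj' heq rfl).1
          exact hdist j (j+2) (by omega) (by omega) (by omega) this
      · have hi : i = j+1 := by omega
        exact hi ▸ hf
  obtain ⟨m, hm1, hbw, hfw⟩ : ∃ m, m + 1 ≤ k ∧
      (∀ i, 1 ≤ i → i ≤ m → ∃ x, as i = as (i+1) ++ [x]) ∧
      (∀ i, m + 1 ≤ i → i < k → ∃ x, as (i+1) = as i ++ [x]) := by
    by_cases hJ : ∃ i, 1 ≤ i ∧ i < k ∧ ∃ x, as (i+1) = as i ++ [x]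
    · obtain ⟨h0, h1, h2⟩ := Nat.find_spec hJ
      refine ⟨Nat.find hJ - 1, by omega, ?_, ?_⟩
      · intro i hi1 hi2
        have hik : i < k := by omega
        rcases hdir i hi1 hik with hf | hb
        · exact absurd ⟨hi1, hik, hf⟩ (Nat.find_min hJ (by omega))
        · exact hb
      · intro i hi1 hi2
        exact hprop (Nat.find hJ) h0 h1 h2 i (by omega) hi2
    · refine ⟨k - 1, by omega, ?_, ?_⟩
      · intro i hi1 hi2
        rcases hdir i hi1 (by omega) with hf | hb
        · exact absurd ⟨i, hi1, by omega, hf⟩ hJ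
        · exact hb
      · intro i hi1 hi2; omega
  obtain ⟨w0, -⟩ := M.nonempty
  set n := k - m - 1 with hn
  have hbxs : ∀ i, ∃ x, 1 ≤ i → i ≤ m →
      as i = as (i+1) ++ [x] ∧ ∃ y, (as (i+1)).getLast? = some y ∧ M.rel x y := by
    intro i
    by_cases h : 1 ≤ i ∧ i ≤ m
    · obtain ⟨x, hx⟩ := hbw i h.1 h.2
      obtain ⟨y, hy, hr⟩ := unravStep_forced_bwd (hstep i h.1 (by omega)) hx
      exact ⟨x, fun _ _ => ⟨hx, y, hy, hr⟩⟩
    · exact ⟨w0, fun h1 h2 => absurd ⟨h1, h2⟩ h⟩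
  choose bx hbx using hbxs
  have hfxs : ∀ i, ∃ x, m + 1 ≤ i → i < k →
      as (i+1) = as i ++ [x] ∧ ∃ y, (as i).getLast? = some y ∧ M.rel y x := by
    intro i
    by_cases h : m + 1 ≤ i ∧ i < k
    · obtain ⟨x, hx⟩ := hfw i h.1 h.2
      obtain ⟨y, hy, hr⟩ := unravStep_forced_fwd (hstep i (by omega) h.2) hx
      exact ⟨x, fun _ _ => ⟨hx, y, hy, hr⟩⟩
    · exact ⟨w0, fun h1 h2 => absurd ⟨h1, h2⟩ h⟩
  choose fx hfx using hfxs
  set vs : ℕ → Ω := fun i => bx (m + 1 - i) with hvs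
  set us : ℕ → Ω := fun i => fx (m + i) with hus
  have Pback : ∀ t, t ≤ m →
      as (m + 1 - t) = as (m + 1) ++ (List.range t).map (fun j => vs (j + 1)) := by
    intro t
    induction t with
    | zero => intro _; simp
    | succ t ih =>
      intro ht
      have h1 : 1 ≤ m - t := by omega
      have h2 : m - t ≤ m := by omega
      have heq : m + 1 - (t+1) = m - t := by omega
      have heq2 : m - t + 1 = m + 1 - t := by omega
      have hb := (hbx (m - t) h1 h2).1
      rw [heq, hb, heq2, ih (by omega), List.range_succ, List.map_append,
        List.append_assoc]
      have : vs (t + 1) = bx (m - t) := by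
        simp only [hvs]
        congr 1 <;> omega
      simp [this]
  have Pfwd : ∀ t, t ≤ n →
      as (m + 1 + t) = as (m + 1) ++ (List.range t).map (fun j => us (j + 1)) := by
    intro t
    induction t with
    | zero => intro _; simp
    | succ t ih =>
      intro ht
      have h1 : m + 1 ≤ m + 1 + t := by omega
      have h2 : m + 1 + t < k := by omega
      have hf := (hfx (m + 1 + t) h1 h2).1
      have heq : m + 1 + (t + 1) = (m + 1 + t) + 1 := by omega
      rw [heq, hf, ih (by omega), List.range_succ, List.map_append, List.append_assoc]
      have : us (t + 1) = fx (m + 1 + t) := by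
        simp only [hus]
        congr 1 <;> omega
      simp [this]
  have hlastback : ∀ t, 1 ≤ t → t ≤ m →
      (as (m + 1 - t)).getLast? = some (vs t) := by
    intro t h1 h2
    obtain ⟨s, rfl⟩ : ∃ s, t = s + 1 := ⟨t - 1, by omega⟩
    rw [Pback (s+1) h2, List.range_succ, List.map_append]
    simpa using getLast?_append_concat _ _ _
  have hlastfwd : ∀ t, 1 ≤ t → t ≤ n →
      (as (m + 1 + t)).getLast? = some (us t) := by
    intro t h1 h2
    obtain ⟨s, rfl⟩ : ∃ s, t = s + 1 := ⟨t - 1, by omega⟩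
    rw [Pfwd (s+1) h2, List.range_succ, List.map_append]
    simpa using getLast?_append_concat _ _ _
  obtain ⟨e, he⟩ : ∃ e, (as (m + 1)).getLast? = some e := by
    have hne := (hmem (m+1) (by omega) (by omega)).1
    exact Option.isSome_iff_exists.1 (List.getLast?_isSome.2 hne)
  refine ⟨m, n, by omega, vs, us, ?_, ⟨e, he, ?_, ?_⟩, ?_, ?_, ?_⟩
  · -- rel (vs (i+1)) (vs i)
    intro i h1 h2
    obtain ⟨y, hy, hr⟩ := (hbx (m - i) (by omega) (by omega)).2
    have hidx : m - i + 1 = m + 1 - i := by omega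
    rw [hidx, hlastback i h1 (by omega)] at hy
    have hvseq : vs (i + 1) = bx (m - i) := by
      simp only [hvs]; congr 1 <;> omega
    rw [hvseq]
    cases hy
    exact hr
  · -- rel (vs 1) e
    intro hm
    obtain ⟨y, hy, hr⟩ := (hbx m (by omega) (le_refl m)).2
    rw [he] at hy
    have : vs 1 = bx m := by simp only [hvs]; congr 1 <;> omega
    rw [this]
    cases hy
    exact hr
  · -- rel e (us 1)
    intro hn1
    obtain ⟨y, hy, hr⟩ := (hfx (m + 1) (le_refl _) (by omega)).2
    rw [he] at hy
    have : us 1 = fx (m + 1) := rfl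
    rw [this]
    cases hy
    exact hr
  · -- rel (us i) (us (i+1))
    intro i h1 h2
    obtain ⟨y, hy, hr⟩ := (hfx (m + 1 + i) (by omega) (by omega)).2
    rw [hlastfwd i h1 (by omega)] at hy
    have : us (i + 1) = fx (m + 1 + i) := by
      simp only [hus]; congr 1 <;> omega
    rw [this]
    cases hy
    exact hr
  · -- as i for 1 ≤ i ≤ m
    intro i h1 h2
    have := Pback (m + 1 - i) (by omega)
    have hii : m + 1 - (m + 1 - i) = i := by omega
    have hjj : m + 1 - i = m - i + 1 := by omega
    rw [hii, hjj] at this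
    exact this
  · -- as (m+1+i) for 1 ≤ i ≤ n
    intro i h1 h2
    exact Pfwd i h2
end

section
/- For every pointed Θ-model (M,w), the bi-unravelling M^un_w = (W^un_w, ≺^un_w, V^un_w) is itself a Θ-model: the relation ≺^un_w is a partial order (reflexive, transitive, and antisymmetric) on W^un_w, and the valuation V^un_w is monotone with respect to ≺^un_w (if α ≺^un_w β and α ∈ V^un_w(p) then β ∈ V^un_w(p)). -/
open Classical in
/-- The "height" of a sequence: number of up-pairs minus number of down-pairs. -/
noncomputable def unravWgt {A Ω : Type} (M : SKModel A Ω) : List Ω → ℤ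
  | [] => 0
  | [_] => 0
  | a :: b :: l => (if M.rel a b then 1 else -1) + unravWgt M (b :: l)

open Classical in
lemma unravWgt_concat {A Ω : Type} (M : SKModel A Ω) :
    ∀ (l : List Ω) (a b : Ω), l.getLast? = some b →
      unravWgt M (l ++ [a]) = unravWgt M l + (if M.rel b a then 1 else -1) := by
  intro l
  induction l with
  | nil => intro a b h; simp at h
  | cons c l ih =>
    intro a b h
    cases l with
    | nil =>
      simp [List.getLast?] at h
      subst h
      simp [unravWgt]
    | cons d l' =>
      have hlast : (d :: l').getLast? = some b := by
        rw [List.getLast?_cons_cons] at h; exact h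
      have := ih a b hlast
      show unravWgt M (c :: d :: (l' ++ [a])) = _
      simp only [unravWgt] at *
      rw [List.cons_append] at this
      rw [this]
      ring

/-- Every one-step move raises the height by exactly 1. -/
lemma unravStep_wgt {A Ω : Type} (M : SKModel A Ω) (w : Ω) {s t : List Ω}
    (h : unravStep M w s t) : unravWgt M t = unravWgt M s + 1 := by
  obtain ⟨hs, ht, hcase⟩ := h
  rcases hcase with ⟨x, y, hlast, rfl, hrel⟩ | ⟨x, y, hlast, rfl, hrel⟩
  · rw [unravWgt_concat M s x y hlast]
    simp [hrel]
  · -- s = t ++ [x], M.rel x y, y = last of t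
    have hchain := hs.2.2.2
    simp only [List.Chain'] at hchain; rw [List.isChain_append] at hchain
    obtain ⟨-, -, hc⟩ := hchain
    have hxy : (M.rel y x ∨ M.rel x y) ∧ y ≠ x := by
      apply hc y hlast x; simp
    have hnotyx : ¬ M.rel y x := fun h' => hxy.2 (M.rel_antisymm h' hrel)
    rw [unravWgt_concat M t x y hlast]
    simp [hnotyx]

lemma unravRel_wgt {A Ω : Type} (M : SKModel A Ω) (w : Ω) {s t : List Ω}
    (h : unravRel M w s t) : unravWgt M s ≤ unravWgt M t := by
  induction h with
  | refl => exact le_refl _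
  | tail _ hst ih => have := unravStep_wgt M w hst; omega

/-- Every one-step move relates the last elements by `M.rel`. -/
lemma unravStep_last {A Ω : Type} (M : SKModel A Ω) (w : Ω) {s t : List Ω}
    (h : unravStep M w s t) :
    ∃ a b, s.getLast? = some a ∧ t.getLast? = some b ∧ M.rel a b := by
  obtain ⟨hs, ht, hcase⟩ := h
  rcases hcase with ⟨x, y, hlast, rfl, hrel⟩ | ⟨x, y, hlast, rfl, hrel⟩
  · exact ⟨y, x, hlast, by simp, hrel⟩
  · exact ⟨x, y, by simp, hlast, hrel⟩

/-- Lemma 3.5. For every pointed `Θ`-model `(M,w)`, the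
bi-unravelling `M^un_w = (W^un_w, ≺^un_w, V^un_w)` is itself a `Θ`-model:
`≺^un_w` is reflexive, transitive and antisymmetric on `W^un_w`, and the
valuation `V^un_w` is monotone with respect to `≺^un_w`. -/
theorem bil_unravelling_is_model (A : Type) (Ω : Type) (M : SKModel A Ω)
    (w : Ω) (hw : w ∈ M.dom) :
    (∀ α ∈ unravDom M w, unravRel M w α α) ∧
    (∀ α β γ : List Ω, unravRel M w α β → unravRel M w β γ → unravRel M w α γ) ∧
    (∀ α ∈ unravDom M w, ∀ β ∈ unravDom M w,
      unravRel M w α β → unravRel M w β α → α = β) ∧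
    (∀ p : A, ∀ α ∈ unravVal M w p, ∀ β ∈ unravDom M w,
      unravRel M w α β → β ∈ unravVal M w p) := by
  refine ⟨fun α _ => Relation.ReflTransGen.refl,
    fun α β γ h1 h2 => h1.trans h2, ?_, ?_⟩
  · intro α hα β hβ hab hba
    rcases Relation.ReflTransGen.cases_head hab with rfl | ⟨c, hstep, hrest⟩
    · rfl
    · exfalso
      have h1 := unravStep_wgt M w hstep
      have h2 := unravRel_wgt M w hrest
      have h3 := unravRel_wgt M w hba
      omega
  · intro p α hα β hβ hab
    obtain ⟨hαdom, y, hy, hyp⟩ := hα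
    clear hβ
    induction hab with
    | refl => exact ⟨hαdom, y, hy, hyp⟩
    | @tail b c hrb hstep ih =>
      obtain ⟨hbdom, z, hz, hzp⟩ := ih
      obtain ⟨a', b', ha', hb', hrel⟩ := unravStep_last M w hstep
      rw [hz] at ha'
      cases ha'
      exact ⟨hstep.2.1, b', hb', M.val_mono p hrel hzp⟩
end

section
/- Let (M,w) be a pointed Θ-model. Then the relation B := {(wₙ, w̄ₙ), (w̄ₙ, wₙ) : w̄ₙ ∈ W^un_w}, which relates each sequence of the bi-unravelling with its last element in both directions, is a bi-asimulation from (M^un_w, w) to (M, w) and also a bi-asimulation from (M, w) to (M^un_w, w). -/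
section UnravAux

variable {A Ω : Type} {M : SKModel A Ω} {w : Ω}

lemma unrav_exists_last {α : List Ω} (hα : α ∈ unravDom M w) :
    ∃ a, α.getLast? = some a := by
  cases h' : α.getLast? with
  | none => exact absurd (List.getLast?_eq_none_iff.mp h') hα.1
  | some a => exact ⟨a, rfl⟩

lemma unrav_last_mem_dom {α : List Ω} (hα : α ∈ unravDom M w) {x : Ω}
    (hx : α.getLast? = some x) : x ∈ M.dom :=
  hα.2.2.1 x (List.mem_of_getLast? hx)

lemma unravStep_last_rel {α β : List Ω} (h : unravStep M w α β) :
    ∃ a b, α.getLast? = some a ∧ β.getLast? = some b ∧ M.rel a b := by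
  obtain ⟨hα, hβ, h | h⟩ := h
  · obtain ⟨x, y, hy, ht, hr⟩ := h
    exact ⟨y, x, hy, by simp [ht], hr⟩
  · obtain ⟨x, y, hy, ht, hr⟩ := h
    exact ⟨x, y, by simp [ht], hy, hr⟩

lemma unravRel_last_rel {α β : List Ω} (hα : α ∈ unravDom M w)
    (h : unravRel M w α β) :
    ∀ a b, α.getLast? = some a → β.getLast? = some b → M.rel a b := by
  induction h with
  | refl =>
    intro a b ha hb
    rw [ha] at hb
    obtain rfl : a = b := by injection hb
    exact M.rel_refl a (unrav_last_mem_dom hα ha)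
  | tail h' step ih =>
    intro a b ha hb
    obtain ⟨a', b', hc, hβ, hr⟩ := unravStep_last_rel step
    rw [hb] at hβ
    obtain rfl : b' = b := by injection hβ with h; exact h.symm
    exact M.rel_trans (ih a a' ha hc) hr

lemma unrav_extend_mem {α : List Ω} (hα : α ∈ unravDom M w) {x t : Ω}
    (hx : α.getLast? = some x) (ht : t ∈ M.dom)
    (hr : M.rel x t ∨ M.rel t x) (hne : x ≠ t) : α ++ [t] ∈ unravDom M w := by
  obtain ⟨hne0, hh, hmem, hch⟩ := hα
  refine ⟨by simp, ?_, ?_, ?_⟩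
  · cases α with
    | nil => exact absurd rfl hne0
    | cons a l => simpa using hh
  · intro y hy
    rcases List.mem_append.mp hy with hy | hy
    · exact hmem y hy
    · simp only [List.mem_singleton] at hy; subst hy; exact ht
  · refine List.isChain_append.mpr ⟨hch, List.isChain_singleton t, ?_⟩
    intro a ha b hb
    rw [hx] at ha
    simp only [Option.mem_def, List.head?_cons, Option.some.injEq] at ha hb
    subst ha; subst hb
    exact ⟨hr, hne⟩

end UnravAux

/-- Lemma 3.6(1). Let `(M,w)` be a pointed `Θ`-model and
let `U` be its bi-unravelling `M^un_w`. The relation `B` relating every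
sequence of the bi-unravelling with its last element (in both directions) is
a bi-asimulation from `(M^un_w, (w))` to `(M,w)` and also a bi-asimulation
from `(M,w)` to `(M^un_w, (w))`. -/
theorem bil_unravelling_asimulation (A : Type) (Θ : Set A) (Ω : Type)
    (M : SKModel A Ω) (w : Ω) (hw : w ∈ M.dom)
    (U : SKModel A (List Ω)) (hU : IsUnravelling M w U) :
    IsBiAsim Θ U M [w] w
      (fun α x => α ∈ unravDom M w ∧ α.getLast? = some x)
      (fun x α => α ∈ unravDom M w ∧ α.getLast? = some x) ∧
    IsBiAsim Θ M U w [w]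
      (fun x α => α ∈ unravDom M w ∧ α.getLast? = some x)
      (fun α x => α ∈ unravDom M w ∧ α.getLast? = some x) := by
  obtain ⟨hdom, hrel, hval⟩ := hU
  -- the base point
  have h1w : [w] ∈ unravDom M w := by
    refine ⟨by simp, rfl, ?_, List.isChain_singleton w⟩
    intro x hx; simp only [List.mem_singleton] at hx; subst hx; exact hw
  -- clause: extend a sequence upwards
  have hback : ∀ (v : List Ω) (s t : Ω), (v ∈ unravDom M w ∧ v.getLast? = some s) →
      M.rel s t → ∃ u, U.rel v u ∧ (u ∈ unravDom M w ∧ u.getLast? = some t) := by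
    intro v s t ⟨hv, hvs⟩ hst
    by_cases hse : s = t
    · subst hse
      exact ⟨v, (hrel v v).mpr ⟨hv, hv, Relation.ReflTransGen.refl⟩, hv, hvs⟩
    · have hu : v ++ [t] ∈ unravDom M w :=
        unrav_extend_mem hv hvs (M.rel_mem hst).2 (Or.inl hst) hse
      refine ⟨v ++ [t], (hrel v (v ++ [t])).mpr ⟨hv, hu, Relation.ReflTransGen.single
        ⟨hv, hu, Or.inl ⟨t, s, hvs, rfl, hst⟩⟩⟩, hu, by simp⟩
  -- clause: extend a sequence downwards
  have hforth : ∀ (v : List Ω) (s u : Ω), (v ∈ unravDom M w ∧ v.getLast? = some s) →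
      M.rel u s → ∃ t, U.rel t v ∧ (t ∈ unravDom M w ∧ t.getLast? = some u) := by
    intro v s u ⟨hv, hvs⟩ hus
    by_cases hse : u = s
    · subst hse
      exact ⟨v, (hrel v v).mpr ⟨hv, hv, Relation.ReflTransGen.refl⟩, hv, hvs⟩
    · have ht : v ++ [u] ∈ unravDom M w :=
        unrav_extend_mem hv hvs (M.rel_mem hus).1 (Or.inr hus) (fun h => hse h.symm)
      refine ⟨v ++ [u], (hrel (v ++ [u]) v).mpr ⟨ht, hv, Relation.ReflTransGen.single
        ⟨ht, hv, Or.inr ⟨u, s, hvs, rfl, hus⟩⟩⟩, ht, by simp⟩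
  -- clause: project a U-step to an M-step
  have hproj : ∀ (s t : List Ω), U.rel s t → ∀ a, s.getLast? = some a →
      ∃ b, t.getLast? = some b ∧ M.rel a b ∧ t ∈ unravDom M w := by
    intro s t hst a ha
    obtain ⟨hs, ht, hr⟩ := (hrel s t).mp hst
    obtain ⟨b, hb⟩ := unrav_exists_last ht
    exact ⟨b, hb, unravRel_last_rel hs hr a b ha hb, ht⟩
  have hmem : ∀ {v : List Ω} {s : Ω}, (v ∈ unravDom M w ∧ v.getLast? = some s) →
      v ∈ U.dom ∧ s ∈ M.dom := by
    intro v s ⟨hv, hvs⟩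
    exact ⟨hdom ▸ hv, unrav_last_mem_dom hv hvs⟩
  have hatomUM : ∀ p ∈ Θ, ∀ {v : List Ω} {s : Ω},
      (v ∈ unravDom M w ∧ v.getLast? = some s) → v ∈ U.val p → s ∈ M.val p := by
    intro p _ v s ⟨hv, hvs⟩ hvp
    rw [hval p] at hvp
    obtain ⟨_, y, hy, hyp⟩ := hvp
    rw [hvs] at hy
    obtain rfl : y = s := by injection hy with h; exact h.symm
    exact hyp
  have hatomMU : ∀ p ∈ Θ, ∀ {v : Ω} {s : List Ω},
      (s ∈ unravDom M w ∧ s.getLast? = some v) → v ∈ M.val p → s ∈ U.val p := by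
    intro p _ v s ⟨hs, hsv⟩ hvp
    rw [hval p]
    exact ⟨hs, v, hsv, hvp⟩
  constructor
  · refine ⟨hmem, fun h => (hmem h).symm, ⟨h1w, rfl⟩, hatomUM, hatomMU, ?_, ?_, ?_, ?_⟩
    · -- backR : R v s → M.rel s t → ∃ u, U.rel v u ∧ S t u ∧ R u t
      intro v s t hvs hst
      obtain ⟨u, h1, h2⟩ := hback v s t hvs hst
      exact ⟨u, h1, h2, h2⟩
    · -- backS : S v s → U.rel s t → ∃ u, M.rel v u ∧ R t u ∧ S u t
      intro v s t ⟨hs, hsv⟩ hst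
      obtain ⟨b, hb, hr, ht⟩ := hproj s t hst v hsv
      exact ⟨b, hr, ⟨ht, hb⟩, ⟨ht, hb⟩⟩
    · -- forthR : R v s → U.rel u v → ∃ t, M.rel t s ∧ S t u ∧ R u t
      intro v s u ⟨hv, hvs⟩ huv
      obtain ⟨hu, _, hr⟩ := (hrel u v).mp huv
      obtain ⟨a, ha⟩ := unrav_exists_last hu
      exact ⟨a, unravRel_last_rel hu hr a s ha hvs, ⟨hu, ha⟩, ⟨hu, ha⟩⟩
    · -- forthS : S v s → M.rel u v → ∃ t, U.rel t s ∧ R t u ∧ S u t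
      intro v s u hsv huv
      obtain ⟨t, h1, h2⟩ := hforth s v u hsv huv
      exact ⟨t, h1, h2, h2⟩
  · refine ⟨fun h => (hmem h).symm, hmem, ⟨h1w, rfl⟩, hatomMU, hatomUM, ?_, ?_, ?_, ?_⟩
    · -- backR : R v s → U.rel s t → ∃ u, M.rel v u ∧ S t u ∧ R u t
      intro v s t ⟨hs, hsv⟩ hst
      obtain ⟨b, hb, hr, ht⟩ := hproj s t hst v hsv
      exact ⟨b, hr, ⟨ht, hb⟩, ⟨ht, hb⟩⟩
    · -- backS : S v s → M.rel s t → ∃ u, U.rel v u ∧ R t u ∧ S u t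
      intro v s t hvs hst
      obtain ⟨u, h1, h2⟩ := hback v s t hvs hst
      exact ⟨u, h1, h2, h2⟩
    · -- forthR : R v s → M.rel u v → ∃ t, U.rel t s ∧ S t u ∧ R u t
      intro v s u hsv huv
      obtain ⟨t, h1, h2⟩ := hforth s v u hsv huv
      exact ⟨t, h1, h2, h2⟩
    · -- forthS : S v s → U.rel u v → ∃ t, M.rel t s ∧ R t u ∧ S u t
      intro v s u ⟨hv, hvs⟩ huv
      obtain ⟨hu, _, hr⟩ := (hrel u v).mp huv
      obtain ⟨a, ha⟩ := unrav_exists_last hu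
      exact ⟨a, unravRel_last_rel hu hr a s ha hvs, ⟨hu, ha⟩, ⟨hu, ha⟩⟩
end
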